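/- Let V be an open subset of ℝ⁵ = ℍ×ℝ and let v : V → ℝ be of class C². Then for every z = (z₁,z₂) ∈ π^{−1}(V) ⊂ ℝ⁸, Δ(v ∘ π)(z) = 4(|z₁|² + |z₂|²)·(Δv)(π(z)), where the Laplacian on the left is the Euclidean Laplacian on ℝ⁸ and on the right the Euclidean Laplacian on ℝ⁵. Equivalently, Δ(v ∘ π)(z) = 4|π(z)|·(Δv)(π(z)), since |π(z)| = |z₁|² + |z₂|². -/

import Mathlib

/-- The Laplacian (trace of the second derivative) of a real-valued function on a
finite-dimensional Euclidean space, computed in the standard orthonormal coordinates. -/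
noncomputable def lap {ι : Type*} [Fintype ι] [DecidableEq ι]
    (u : EuclideanSpace ℝ ι → ℝ) (x : EuclideanSpace ℝ ι) : ℝ :=
  ∑ i, iteratedFDeriv ℝ 2 u x ![EuclideanSpace.single i 1, EuclideanSpace.single i 1]

/-- The first quaternion coordinate of a point of ℝ⁸ = ℍ×ℍ. -/
def quat1 (x : EuclideanSpace ℝ (Fin 8)) : Quaternion ℝ := ⟨x 0, x 1, x 2, x 3⟩

/-- The second quaternion coordinate of a point of ℝ⁸ = ℍ×ℍ. -/
def quat2 (x : EuclideanSpace ℝ (Fin 8)) : Quaternion ℝ := ⟨x 4, x 5, x 6, x 7⟩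

/-- The Hopf map π : ℝ⁸ = ℍ×ℍ → ℝ⁵ = ℍ×ℝ, π(z₁,z₂) = (2·conj(z₁)·z₂, |z₁|² − |z₂|²). -/
noncomputable def hopfH (x : EuclideanSpace ℝ (Fin 8)) : EuclideanSpace ℝ (Fin 5) :=
  WithLp.toLp 2 ![(2 * star (quat1 x) * quat2 x).re,
    (2 * star (quat1 x) * quat2 x).imI,
    (2 * star (quat1 x) * quat2 x).imJ,
    (2 * star (quat1 x) * quat2 x).imK,
    ‖quat1 x‖ ^ 2 - ‖quat2 x‖ ^ 2]
lemma vec8_five {α : Type*} (a b c d e f g h : α) : ![a,b,c,d,e,f,g,h] 5 = f := rfl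
lemma vec8_six {α : Type*} (a b c d e f g h : α) : ![a,b,c,d,e,f,g,h] 6 = g := rfl
lemma vec8_seven {α : Type*} (a b c d e f g h : α) : ![a,b,c,d,e,f,g,h] 7 = h := rfl

noncomputable section
open Finset

local notation "E8" => EuclideanSpace ℝ (Fin 8)
local notation "E5" => EuclideanSpace ℝ (Fin 5)

def Bfun (x y : Fin 8 → ℝ) : Fin 5 → ℝ :=
  ![x 0*y 4 + x 4*y 0 + x 1*y 5 + x 5*y 1 + x 2*y 6 + x 6*y 2 + x 3*y 7 + x 7*y 3,
    x 0*y 5 + x 5*y 0 - x 1*y 4 - x 4*y 1 + x 3*y 6 + x 6*y 3 - x 2*y 7 - x 7*y 2,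
    x 0*y 6 + x 6*y 0 + x 1*y 7 + x 7*y 1 - x 2*y 4 - x 4*y 2 - x 3*y 5 - x 5*y 3,
    x 0*y 7 + x 7*y 0 - x 1*y 6 - x 6*y 1 + x 2*y 5 + x 5*y 2 - x 3*y 4 - x 4*y 3,
    x 0*y 0 + x 1*y 1 + x 2*y 2 + x 3*y 3 - x 4*y 4 - x 5*y 5 - x 6*y 6 - x 7*y 7]

def Blm : E8 →ₗ[ℝ] E8 →ₗ[ℝ] E5 :=
  LinearMap.mk₂ ℝ (fun x y => (WithLp.equiv 2 _).symm (Bfun x y))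
    (by intro x x' y; ext α; fin_cases α <;>
        simp [Bfun, PiLp.add_apply, WithLp.equiv_symm_apply, PiLp.toLp_apply] <;> ring)
    (by intro c x y; ext α; fin_cases α <;>
        simp [Bfun, PiLp.smul_apply, WithLp.equiv_symm_apply, PiLp.toLp_apply, smul_eq_mul] <;> ring)
    (by intro x y y'; ext α; fin_cases α <;>
        simp [Bfun, PiLp.add_apply, WithLp.equiv_symm_apply, PiLp.toLp_apply] <;> ring)
    (by intro c x y; ext α; fin_cases α <;>
        simp [Bfun, PiLp.smul_apply, WithLp.equiv_symm_apply, PiLp.toLp_apply, smul_eq_mul] <;> ring)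

def B : E8 →L[ℝ] E8 →L[ℝ] E5 :=
  LinearMap.toContinuousLinearMap
    { toFun := fun x => (Blm x).toContinuousLinearMap
      map_add' := fun x y => by ext u; simp [map_add]
      map_smul' := fun c x => by ext u; simp }

lemma B_apply (x y : E8) (α : Fin 5) : B x y α = Bfun x y α := rfl

lemma B_symm (x y : E8) : B x y = B y x := by
  ext α; rw [B_apply, B_apply]; fin_cases α <;> simp [Bfun] <;> ring

lemma hopf_eq (x : E8) : hopfH x = B x x := by
  have h2 : (2 : Quaternion ℝ) * star (quat1 x) * quat2 x
      = star (quat1 x) * quat2 x + star (quat1 x) * quat2 x := by rw [two_mul, add_mul]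
  ext α
  simp only [hopfH, h2]
  fin_cases α <;>
    simp [B_apply, Bfun, Quaternion.re_mul, Quaternion.imI_mul,
      Quaternion.imJ_mul, Quaternion.imK_mul, Quaternion.re_add, Quaternion.imI_add,
      Quaternion.imJ_add, Quaternion.imK_add, sq, ← Quaternion.normSq_eq_norm_mul_self,
      Quaternion.normSq_def'] <;> simp [quat1, quat2] <;> ring
lemma euclid_decomp {n : ℕ} (w : EuclideanSpace ℝ (Fin n)) :
    w = ∑ α, w α • EuclideanSpace.single α 1 := by
  have h := (EuclideanSpace.basisFun (Fin n) ℝ).sum_repr w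
  simp only [EuclideanSpace.basisFun_apply, EuclideanSpace.basisFun_repr] at h
  exact h.symm

lemma hopf_hasFDerivAt (x : E8) :
    HasFDerivAt hopfH ((B + B.flip) x) x := by
  have hid : HasFDerivAt (fun y : E8 => y) (ContinuousLinearMap.id ℝ E8) x :=
    hasFDerivAt_id x
  have h := B.hasFDerivAt_of_bilinear hid hid
  have he : hopfH = fun y : E8 => B y y := funext hopf_eq
  have heq : B.precompR E8 (ContinuousLinearMap.id ℝ E8 x)
        (ContinuousLinearMap.id ℝ E8) +
      B.precompL E8 (ContinuousLinearMap.id ℝ E8) (ContinuousLinearMap.id ℝ E8 x)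
      = (B + B.flip) x := by
    ext u
    simp [ContinuousLinearMap.precompR, ContinuousLinearMap.precompL]
  rw [he, ← heq]
  exact h
lemma hR (z : E8) : ‖quat1 z‖ ^ 2 + ‖quat2 z‖ ^ 2
    = z 0^2 + z 1^2 + z 2^2 + z 3^2 + z 4^2 + z 5^2 + z 6^2 + z 7^2 := by
  rw [sq, sq, ← Quaternion.normSq_eq_norm_mul_self, ← Quaternion.normSq_eq_norm_mul_self,
    Quaternion.normSq_def', Quaternion.normSq_def']
  simp [quat1, quat2]
  ring

lemma hnorm (z : E8) : ‖hopfH z‖ = ‖quat1 z‖ ^ 2 + ‖quat2 z‖ ^ 2 := by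
  rw [hopf_eq, EuclideanSpace.norm_eq, hR]
  rw [Fin.sum_univ_five]
  simp only [B_apply, Bfun, Matrix.cons_val_zero, Matrix.cons_val_one, Matrix.head_cons,
    Matrix.cons_val_two, Matrix.tail_cons, Matrix.cons_val_three, Matrix.cons_val_four,
    Real.norm_eq_abs, sq_abs]
  rw [show (z 0 * z 4 + z 4 * z 0 + z 1 * z 5 + z 5 * z 1 + z 2 * z 6 + z 6 * z 2 + z 3 * z 7 + z 7 * z 3) ^ 2 +
          (z 0 * z 5 + z 5 * z 0 - z 1 * z 4 - z 4 * z 1 + z 3 * z 6 + z 6 * z 3 - z 2 * z 7 - z 7 * z 2) ^ 2 +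
        (z 0 * z 6 + z 6 * z 0 + z 1 * z 7 + z 7 * z 1 - z 2 * z 4 - z 4 * z 2 - z 3 * z 5 - z 5 * z 3) ^ 2 +
      (z 0 * z 7 + z 7 * z 0 - z 1 * z 6 - z 6 * z 1 + z 2 * z 5 + z 5 * z 2 - z 3 * z 4 - z 4 * z 3) ^ 2 +
    (z 0 * z 0 + z 1 * z 1 + z 2 * z 2 + z 3 * z 3 - z 4 * z 4 - z 5 * z 5 - z 6 * z 6 - z 7 * z 7) ^ 2
    = (z 0^2 + z 1^2 + z 2^2 + z 3^2 + z 4^2 + z 5^2 + z 6^2 + z 7^2)^2 from by ring]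
  exact Real.sqrt_sq (by positivity)
lemma hHexpand (H : EuclideanSpace ℝ (Fin 5) →L[ℝ] EuclideanSpace ℝ (Fin 5) →L[ℝ] ℝ)
    (w w' : EuclideanSpace ℝ (Fin 5)) : H w w'
      = ∑ α : Fin 5, ∑ β : Fin 5, w α * w' β
          * H (EuclideanSpace.single α 1) (EuclideanSpace.single β 1) := by
  conv_lhs => rw [euclid_decomp w, euclid_decomp w']
  rw [map_sum]
  conv_rhs => rw [Finset.sum_comm]
  refine Finset.sum_congr rfl fun β _ => ?_
  rw [map_smul, map_sum, ContinuousLinearMap.sum_apply]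
  rw [smul_eq_mul, Finset.mul_sum]
  refine Finset.sum_congr rfl fun α _ => ?_
  rw [map_smul, ContinuousLinearMap.smul_apply]
  simp only [smul_eq_mul]
  ring
lemma hopf_differentiable : Differentiable ℝ hopfH :=
  fun x => (hopf_hasFDerivAt x).differentiableAt

lemma hopf_continuous : Continuous hopfH := hopf_differentiable.continuous

lemma D_apply (z u : E8) (α : Fin 5) :
    (B + B.flip) z u α = Bfun z u α + Bfun u z α := rfl

/-- The (half) Jacobian matrix of the Hopf map. -/
def J (z : Fin 8 → ℝ) : Fin 5 → Fin 8 → ℝ :=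
  ![![z 4, z 5, z 6, z 7, z 0, z 1, z 2, z 3],
    ![z 5, -z 4, -z 7, z 6, -z 1, z 0, z 3, -z 2],
    ![z 6, z 7, -z 4, -z 5, -z 2, -z 3, z 0, z 1],
    ![z 7, -z 6, z 5, -z 4, -z 3, z 2, -z 1, z 0],
    ![z 0, z 1, z 2, z 3, -z 4, -z 5, -z 6, -z 7]]

lemma Bfun_symm (x y : Fin 8 → ℝ) (γ : Fin 5) : Bfun x y γ = Bfun y x γ := by
  fin_cases γ <;> simp [Bfun] <;> ring

lemma Bfun_right (x y : Fin 8 → ℝ) (γ : Fin 5) : Bfun x y γ = ∑ j, J x γ j * y j := by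
  fin_cases γ <;> (rw [Fin.sum_univ_eight]; simp [Bfun, J, vec8_five, vec8_six, vec8_seven]; ring)

lemma sum_J_single (x : Fin 8 → ℝ) (γ : Fin 5) (i : Fin 8) :
    (∑ j, J x γ j * (EuclideanSpace.single i (1:ℝ)) j) = J x γ i := by
  have h : ∀ j, J x γ j * (EuclideanSpace.single i (1:ℝ)) j
      = if j = i then J x γ j else 0 := by
    intro j
    rw [EuclideanSpace.single_apply]
    by_cases h : j = i <;> simp [h, eq_comm]
  simp only [h]
  simp

lemma D_single (z : E8) (i : Fin 8) (γ : Fin 5) :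
    (B + B.flip) z (EuclideanSpace.single i 1) γ = 2 * J z γ i := by
  rw [D_apply, Bfun_symm _ z, Bfun_right, sum_J_single]
  ring

lemma B_single_single (i : Fin 8) (γ : Fin 5) :
    B (EuclideanSpace.single i 1) (EuclideanSpace.single i 1) γ
      = if γ = 4 then (if (i : ℕ) < 4 then (1:ℝ) else -1) else 0 := by
  have h : B (EuclideanSpace.single i (1:ℝ)) (EuclideanSpace.single i 1) γ
      = J (EuclideanSpace.single i 1) γ i := by
    rw [B_apply, Bfun_right, sum_J_single]
  rw [h]
  fin_cases i <;> fin_cases γ <;>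
    simp [J, EuclideanSpace.single_apply, vec8_five, vec8_six, vec8_seven]

lemma J_orth (z : E8) (α β : Fin 5) :
    (∑ i, J z α i * J z β i)
      = if α = β then z 0^2 + z 1^2 + z 2^2 + z 3^2 + z 4^2 + z 5^2 + z 6^2 + z 7^2 else 0 := by
  fin_cases α <;> fin_cases β <;> (rw [Fin.sum_univ_eight]; simp [J, vec8_five, vec8_six, vec8_seven]) <;> ring

/-- Δ(v ∘ π)(z) = 4(|z₁|² + |z₂|²)·(Δv)(π(z)) = 4|π(z)|·(Δv)(π(z)). -/
theorem stmt_6 (V : Set (EuclideanSpace ℝ (Fin 5))) (hV : IsOpen V)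
    (v : EuclideanSpace ℝ (Fin 5) → ℝ) (hv : ContDiffOn ℝ 2 v V)
    (z : EuclideanSpace ℝ (Fin 8)) (hz : z ∈ hopfH ⁻¹' V) :
    lap (v ∘ hopfH) z =
      4 * (‖quat1 z‖ ^ 2 + ‖quat2 z‖ ^ 2) * lap v (hopfH z) ∧
    lap (v ∘ hopfH) z = 4 * ‖hopfH z‖ * lap v (hopfH z) := by
  classical
  have hpV : hopfH z ∈ V := hz
  set p := hopfH z with hp
  have hcd : ContDiffAt ℝ 2 v p := hv.contDiffAt (hV.mem_nhds hpV)
  obtain ⟨U0, hU0, hvU0⟩ := hcd.contDiffOn le_rfl (by simp)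
  obtain ⟨U, hUsub, hUo, hpU⟩ := mem_nhds_iff.1 hU0
  have hvU : ContDiffOn ℝ 2 v U := hvU0.mono hUsub
  have hdv : ∀ y ∈ U, DifferentiableAt ℝ v y := fun y hy =>
    (hvU.contDiffAt (hUo.mem_nhds hy)).differentiableAt (by norm_num)
  have hfd1 : ContDiffOn ℝ 1 (fderiv ℝ v) U := hvU.fderiv_of_isOpen hUo (by norm_num)
  have hdfv : DifferentiableAt ℝ (fderiv ℝ v) p :=
    (hfd1.contDiffAt (hUo.mem_nhds hpU)).differentiableAt (by norm_num)
  set H := fderiv ℝ (fderiv ℝ v) p with hHdef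
  set D := (B + B.flip) z with hDdef
  set g := fderiv ℝ v p with hgdef
  have hWo : IsOpen (hopfH ⁻¹' U) := hUo.preimage hopf_continuous
  have hzW : z ∈ hopfH ⁻¹' U := hpU
  have hfcomp : ∀ x ∈ hopfH ⁻¹' U,
      fderiv ℝ (v ∘ hopfH) x = (fderiv ℝ v (hopfH x)).comp ((B + B.flip) x) := by
    intro x hx
    rw [fderiv_comp x (hdv _ hx) (hopf_hasFDerivAt x).differentiableAt,
      (hopf_hasFDerivAt x).fderiv]
  have hev : fderiv ℝ (v ∘ hopfH) =ᶠ[nhds z]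
      fun x => (fderiv ℝ v (hopfH x)).comp ((B + B.flip) x) :=
    Filter.eventuallyEq_of_mem (hWo.mem_nhds hzW) hfcomp
  have hg : HasFDerivAt (fun x => fderiv ℝ v (hopfH x)) (H.comp D) z :=
    (hdfv.hasFDerivAt).comp z (hopf_hasFDerivAt z)
  have hm : HasFDerivAt (fun x : E8 => (B + B.flip) x) (B + B.flip) z :=
    (B + B.flip).hasFDerivAt
  have hF := hg.clm_comp hm
  have hkey : ∀ u w : E8, fderiv ℝ (fderiv ℝ (v ∘ hopfH)) z u w
      = H (D u) (D w) + g (B u w + B w u) := by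
    intro u w
    rw [hev.fderiv_eq, hF.fderiv]
    simp only [ContinuousLinearMap.add_apply, ContinuousLinearMap.coe_comp',
      Function.comp_apply, ContinuousLinearMap.compL_apply, ContinuousLinearMap.flip_apply,
      ← hp, ← hgdef, ← hDdef]
    exact add_comm _ _
  have hlapc : lap (v ∘ hopfH) z = ∑ i : Fin 8,
      (H (D (EuclideanSpace.single i 1)) (D (EuclideanSpace.single i 1))
        + g (B (EuclideanSpace.single i 1) (EuclideanSpace.single i 1)
            + B (EuclideanSpace.single i 1) (EuclideanSpace.single i 1))) := by
    simp only [lap]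
    refine Finset.sum_congr rfl fun i _ => ?_
    rw [iteratedFDeriv_two_apply]
    simp only [Matrix.cons_val_zero, Matrix.cons_val_one, Matrix.head_cons]
    exact hkey _ _
  have hlapv : lap v p = ∑ α : Fin 5,
      H (EuclideanSpace.single α 1) (EuclideanSpace.single α 1) := by
    simp only [lap]
    refine Finset.sum_congr rfl fun α _ => ?_
    rw [iteratedFDeriv_two_apply]
    simp only [Matrix.cons_val_zero, Matrix.cons_val_one, Matrix.head_cons]
    rfl
  have glin : ∀ w : E5, g w = ∑ γ : Fin 5, w γ * g (EuclideanSpace.single γ 1) := by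
    intro w
    conv_lhs => rw [euclid_decomp w]
    rw [map_sum]
    exact Finset.sum_congr rfl fun γ _ => by rw [map_smul]; simp [smul_eq_mul]
  have hzero : ∑ i : Fin 8, g (B (EuclideanSpace.single i 1) (EuclideanSpace.single i 1)
      + B (EuclideanSpace.single i 1) (EuclideanSpace.single i 1)) = 0 := by
    have hm2 : ∀ i : Fin 8, g (B (EuclideanSpace.single i 1) (EuclideanSpace.single i 1)
        + B (EuclideanSpace.single i 1) (EuclideanSpace.single i 1))
        = ∑ γ : Fin 5, ((if γ = 4 then (if (i : ℕ) < 4 then (1:ℝ) else -1) else 0)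
            + (if γ = 4 then (if (i : ℕ) < 4 then (1:ℝ) else -1) else 0))
              * g (EuclideanSpace.single γ 1) := by
      intro i
      rw [glin]
      refine Finset.sum_congr rfl fun γ _ => ?_
      have : (B (EuclideanSpace.single i (1:ℝ)) (EuclideanSpace.single i 1)
          + B (EuclideanSpace.single i 1) (EuclideanSpace.single i 1)) γ
          = B (EuclideanSpace.single i (1:ℝ)) (EuclideanSpace.single i 1) γ
          + B (EuclideanSpace.single i (1:ℝ)) (EuclideanSpace.single i 1) γ := rfl
      rw [this, B_single_single]
    simp only [hm2]
    rw [Finset.sum_comm]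
    refine Finset.sum_eq_zero fun γ _ => ?_
    rw [Fin.sum_univ_eight]
    have hite : (if γ = (4:Fin 5) then (-1:ℝ) else 0) = -(if γ = 4 then (1:ℝ) else 0) := by
      split <;> norm_num
    norm_num [hite, show ((2:Fin 8):ℕ) = 2 from rfl, show ((3:Fin 8):ℕ) = 3 from rfl,
      show ((4:Fin 8):ℕ) = 4 from rfl, show ((5:Fin 8):ℕ) = 5 from rfl,
      show ((6:Fin 8):ℕ) = 6 from rfl, show ((7:Fin 8):ℕ) = 7 from rfl]
    ring
  have hHexp : ∀ w w' : E5, H w w'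
      = ∑ α : Fin 5, ∑ β : Fin 5, w α * w' β
          * H (EuclideanSpace.single α 1) (EuclideanSpace.single β 1) := fun w w' => hHexpand H w w'
  have hR' : ‖quat1 z‖ ^ 2 + ‖quat2 z‖ ^ 2
      = z 0^2 + z 1^2 + z 2^2 + z 3^2 + z 4^2 + z 5^2 + z 6^2 + z 7^2 := hR z
  have hM : ∀ α β : Fin 5, (∑ i : Fin 8, D (EuclideanSpace.single i 1) α
      * D (EuclideanSpace.single i 1) β)
      = if α = β then 4 * (‖quat1 z‖ ^ 2 + ‖quat2 z‖ ^ 2) else 0 := by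
    intro α β
    have : ∀ i : Fin 8, D (EuclideanSpace.single i 1) α * D (EuclideanSpace.single i 1) β
        = 4 * (J z α i * J z β i) := by
      intro i
      rw [hDdef, D_single, D_single]
      ring
    simp only [this, ← Finset.mul_sum, J_orth, hR']
    by_cases h : α = β <;> simp [h]
  have hmain : ∑ i : Fin 8, H (D (EuclideanSpace.single i 1)) (D (EuclideanSpace.single i 1))
      = 4 * (‖quat1 z‖ ^ 2 + ‖quat2 z‖ ^ 2) * lap v p := by
    calc ∑ i : Fin 8, H (D (EuclideanSpace.single i 1)) (D (EuclideanSpace.single i 1))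
        = ∑ i : Fin 8, ∑ α : Fin 5, ∑ β : Fin 5,
            D (EuclideanSpace.single i 1) α * D (EuclideanSpace.single i 1) β
            * H (EuclideanSpace.single α 1) (EuclideanSpace.single β 1) :=
          Finset.sum_congr rfl fun i _ => hHexp _ _
      _ = ∑ α : Fin 5, ∑ β : Fin 5, (∑ i : Fin 8,
            D (EuclideanSpace.single i 1) α * D (EuclideanSpace.single i 1) β)
            * H (EuclideanSpace.single α 1) (EuclideanSpace.single β 1) := by
          rw [Finset.sum_comm]
          refine Finset.sum_congr rfl fun α _ => ?_
          rw [Finset.sum_comm]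
          refine Finset.sum_congr rfl fun β _ => ?_
          rw [Finset.sum_mul]
      _ = ∑ α : Fin 5, (4 * (‖quat1 z‖ ^ 2 + ‖quat2 z‖ ^ 2))
            * H (EuclideanSpace.single α 1) (EuclideanSpace.single α 1) := by
          refine Finset.sum_congr rfl fun α _ => ?_
          rw [Finset.sum_eq_single α]
          · rw [hM]; simp
          · intro β _ hβ; rw [hM]; simp [Ne.symm hβ]
          · simp
      _ = 4 * (‖quat1 z‖ ^ 2 + ‖quat2 z‖ ^ 2) * lap v p := by rw [hlapv, Finset.mul_sum]
  have hfin : lap (v ∘ hopfH) z = 4 * (‖quat1 z‖ ^ 2 + ‖quat2 z‖ ^ 2) * lap v p := by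
    rw [hlapc, Finset.sum_add_distrib, hzero, add_zero, hmain]
  exact ⟨hfin, by rw [hfin, hp, hnorm]⟩
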